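/- For every real number u with -1 < u < 1, the inequality arccos(u) ≥ π/2 - u - 36·|u|^(3/2) holds. -/

import Mathlib

open Real

theorem arccos_ge_pi_div_two_sub (u : ℝ) (h1 : -1 < u) (h2 : u < 1) :
    Real.arccos u ≥ π / 2 - u - 36 * |u| ^ ((3 : ℝ) / 2) := by
  rw [ge_iff_le, Real.arccos_eq_pi_div_two_sub_arcsin]
  have hmem : u ∈ Set.Icc (-1 : ℝ) 1 := ⟨h1.le, h2.le⟩
  suffices h : Real.arcsin u ≤ u + 36 * |u| ^ ((3 : ℝ) / 2) by linarith
  rcases le_or_gt u 0 with hu | hu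
  · -- arcsin u ≤ u ≤ RHS
    have ha0 : Real.arcsin u ≤ 0 := Real.arcsin_nonpos.2 hu
    have hsin : Real.sin (Real.arcsin u) = u := Real.sin_arcsin h1.le h2.le
    have h3 : Real.arcsin u ≤ u := by
      have := Real.sin_le (neg_nonneg.2 ha0)
      rw [Real.sin_neg] at this
      linarith [hsin ▸ this]
    have h4 : (0:ℝ) ≤ 36 * |u| ^ ((3 : ℝ) / 2) := by positivity
    linarith
  · rw [abs_of_pos hu]
    have hs : u ^ ((3:ℝ)/2) = u * Real.sqrt u := by
      rw [Real.sqrt_eq_rpow, show ((3:ℝ)/2) = 1 + 1/2 by norm_num,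
        Real.rpow_add hu, Real.rpow_one]
    rw [hs]
    have hs0 : 0 < Real.sqrt u := Real.sqrt_pos.2 hu
    have hs2 : Real.sqrt u ^ 2 = u := Real.sq_sqrt hu.le
    have hs1 : Real.sqrt u < 1 := by nlinarith
    rcases le_or_gt (1/36 : ℝ) (Real.sqrt u) with h36 | h36
    · -- arcsin u ≤ (π/2) * u ≤ u + 36 u √u
      have hpi : (3:ℝ) < π := Real.pi_gt_three
      have hpi4 : π ≤ 4 := Real.pi_le_four
      have hy : π/2 * u ∈ Set.Icc (-(π/2)) (π/2) := by
        constructor <;> nlinarith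
      have hjord : u ≤ Real.sin (π/2 * u) := by
        have := Real.mul_le_sin (x := π/2 * u) (by positivity) (by nlinarith)
        calc u = 2/π * (π/2 * u) := by field_simp
        _ ≤ _ := this
      have h5 : Real.arcsin u ≤ π/2 * u :=
        (Real.arcsin_le_iff_le_sin hmem hy).2 hjord
      nlinarith
    · -- small u: use sin y > y - y^3/4 with y = u + 36 u √u
      set y := u + 36 * (u * Real.sqrt u) with hy_def
      have hu1296 : u < 1/1296 := by nlinarith
      have hcu : 36 * (u * Real.sqrt u) < u := by nlinarith
      have hy0 : 0 < y := by positivity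
      have hy2u : y < 2 * u := by simp only [hy_def]; linarith
      have hy1 : y ≤ 1 := by linarith
      have hcube : Real.sin y > y - y^3/4 := by
        have := Real.sin_gt_sub_cube hy0
        linarith [pow_pos hy0 3]
      have hycube : y ^ 3 < 8 * u ^ 3 := by
        have := pow_lt_pow_left₀ hy2u hy0.le (n := 3) (by norm_num)
        nlinarith
      have h2u3 : 2 * u ^ 3 ≤ 36 * (u * Real.sqrt u) := by nlinarith [pow_pos hu 3, sq_nonneg (Real.sqrt u), sq_nonneg u]
      have hsinge : u ≤ Real.sin y := by rw [hy_def] at hcube hycube ⊢; linarith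
      have hpi : (3:ℝ) < π := Real.pi_gt_three
      have hymem : y ∈ Set.Icc (-(π/2)) (π/2) := ⟨by linarith, by linarith⟩
      exact (Real.arcsin_le_iff_le_sin hmem hymem).2 hsinge
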